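/- For a subring T of R the following are equivalent: (a) T has the Skolem property; (b) for every proper ideal A of T, the family {S(a) | a ∈ A} has the finite intersection property in B, i.e. S(a^(1)) ∧ … ∧ S(a^(n)) ≠ 0_B for all a^(1),…,a^(n) ∈ A; (c) every proper ideal of T is contained in an ideal of the form (U)^T for some ultrafilter U in B; (d) every maximal ideal of T is of the form (U)^T for some ultrafilter U in B. -/

import Mathlib

/-!
Common setup: `Λ` is an index set, `D λ` a family of commutative rings,
`R = ∏ λ, D λ` the product ring, and
`B = ∏ λ, P(max (D λ))` the product Boolean algebra of the power sets of the
sets of maximal ideals, realized as the Pi type `∀ l, Set (MaximalSpectrum (D l))`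
with its componentwise Boolean algebra structure (meet = componentwise ∩,
join = componentwise ∪, `⊥ = (∅)_λ`, complement componentwise, order = componentwise ⊆).
-/

variable {Λ : Type*} {D : Λ → Type*}

/-- `S(a) = (V(a_λ))_λ ∈ B`, where `V(x)` is the set of maximal ideals containing `x`. -/
def SFam [∀ l, CommRing (D l)] (a : ∀ l, D l) : ∀ l, Set (MaximalSpectrum (D l)) :=
  fun l => {P | a l ∈ P.asIdeal}

/-- `z(x) = {λ | x_λ = 0}`. -/
def ZFam [∀ l, CommRing (D l)] (x : ∀ l, D l) : Set Λ := {l | x l = 0}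

/-- A filter in a Boolean algebra: a nonempty subset not containing `⊥`, closed
under meets, and upward closed. -/
def IsBFilter {B : Type*} [BooleanAlgebra B] (U : Set B) : Prop :=
  U.Nonempty ∧ ⊥ ∉ U ∧ (∀ X ∈ U, ∀ Y ∈ U, X ⊓ Y ∈ U) ∧ (∀ Y ∈ U, ∀ Z, Y ≤ Z → Z ∈ U)

/-- An ultrafilter in a Boolean algebra: a filter containing `Y` or `Yᶜ` for every `Y`. -/
def IsBUltrafilter {B : Type*} [BooleanAlgebra B] (U : Set B) : Prop :=
  IsBFilter U ∧ ∀ Y, Y ∈ U ∨ Yᶜ ∈ U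

/-- Property (+): for all `r` and all nonzero `a` there is `d` lying in every maximal
ideal containing `a` but not `r`, and in no maximal ideal containing `r`. -/
def PropertyPlus (A : Type*) [CommRing A] : Prop :=
  ∀ r a : A, a ≠ 0 → ∃ d : A,
    (∀ M : Ideal A, M.IsMaximal → a ∈ M → r ∉ M → d ∈ M) ∧
    (∀ M : Ideal A, M.IsMaximal → r ∈ M → d ∉ M)

/-- Property (++): for every `r` there is `d` with `D(r) = V(d)`, i.e. the maximal
ideals containing `d` are exactly those not containing `r`. -/
def PropertyPlusPlus (A : Type*) [CommRing A] : Prop :=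
  ∀ r : A, ∃ d : A, ∀ P : MaximalSpectrum A, d ∈ P.asIdeal ↔ r ∉ P.asIdeal

/-- The Skolem property for a subring `T ⊆ R`: whenever finitely many elements of `T`
generate componentwise the unit ideal of every `D l`, they generate the unit ideal
of `T`. -/
def HasSkolem [∀ l, CommRing (D l)] (T : Subring (∀ l, D l)) : Prop :=
  ∀ (n : ℕ) (a : Fin (n + 1) → T),
    (∀ l, Ideal.span (Set.range fun i => ((a i : ∀ m, D m) l)) = ⊤) →
      Ideal.span (Set.range a) = (⊤ : Ideal T)

section MainAux

variable {Λ : Type*} {D : Λ → Type*} [∀ l, CommRing (D l)]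

lemma sfam_zero : SFam (0 : ∀ l, D l) = ⊤ := by
  funext l; ext P; simp [SFam]

lemma sfam_one : SFam (1 : ∀ l, D l) = ⊥ := by
  funext l; ext P
  simp only [SFam, Pi.one_apply, Set.mem_setOf_eq, Pi.bot_apply, Set.bot_eq_empty,
    Set.mem_empty_iff_false, iff_false]
  intro h
  exact P.isMaximal.ne_top (Ideal.eq_top_of_isUnit_mem _ h isUnit_one)

lemma sfam_add (a b : ∀ l, D l) : SFam a ⊓ SFam b ≤ SFam (a + b) := by
  intro l P hP
  exact Ideal.add_mem _ hP.1 hP.2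

lemma sfam_mul (a b : ∀ l, D l) : SFam b ≤ SFam (a * b) := by
  intro l P hP
  exact Ideal.mul_mem_left _ (a l) hP

lemma IsBFilter.top_mem' {B : Type*} [BooleanAlgebra B] {U : Set B} (h : IsBFilter U) :
    ⊤ ∈ U := by
  obtain ⟨X, hX⟩ := h.1
  exact h.2.2.2 X hX ⊤ le_top

lemma IsBFilter.iInf_mem' {ι : Type*} {X : ι → Type*}
    {U : Set (∀ i, Set (X i))} (h : IsBFilter U) :
    ∀ (n : ℕ) (f : Fin (n + 1) → ∀ i, Set (X i)), (∀ i, f i ∈ U) → (⨅ i, f i) ∈ U := by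
  intro n
  induction n with
  | zero =>
    intro f hf
    have : (⨅ i, f i) = f 0 :=
      le_antisymm (iInf_le _ 0) (le_iInf fun i => by rw [Fin.fin_one_eq_zero i])
    rw [this]; exact hf 0
  | succ n ih =>
    intro f hf
    have key : (⨅ i, f i) = f 0 ⊓ ⨅ i : Fin (n + 1), f i.succ := by
      apply le_antisymm
      · exact le_inf (iInf_le _ 0) (le_iInf fun i => iInf_le _ i.succ)
      · refine le_iInf fun i => ?_
        induction i using Fin.cases with
        | zero => exact inf_le_left
        | succ j => exact inf_le_right.trans (iInf_le _ j)
    rw [key]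
    exact h.2.2.1 _ (hf 0) _ (ih _ fun i => hf i.succ)

lemma exists_bultrafilter {B : Type*} [BooleanAlgebra B] {F : Set B} (hF : IsBFilter F) :
    ∃ U : Set B, IsBUltrafilter U ∧ F ⊆ U := by
  obtain ⟨M, hFM, hMmax⟩ := zorn_subset_nonempty {G : Set B | IsBFilter G}
    (fun c hcS hchain hcne => by
      refine ⟨⋃₀ c, ?_, fun s hs => Set.subset_sUnion_of_mem hs⟩
      obtain ⟨G, hG⟩ := hcne
      have hGF : IsBFilter G := hcS hG
      refine ⟨⟨hGF.1.choose, Set.mem_sUnion.mpr ⟨G, hG, hGF.1.choose_spec⟩⟩, ?_, ?_, ?_⟩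
      · rintro ⟨G', hG', hbot⟩
        exact (hcS hG').2.1 hbot
      · rintro X ⟨G1, hG1, hX⟩ Y ⟨G2, hG2, hY⟩
        rcases hchain.total hG1 hG2 with h | h
        · exact ⟨G2, hG2, (hcS hG2).2.2.1 X (h hX) Y hY⟩
        · exact ⟨G1, hG1, (hcS hG1).2.2.1 X hX Y (h hY)⟩
      · rintro Y ⟨G', hG', hY⟩ Z hYZ
        exact ⟨G', hG', (hcS hG').2.2.2 Y hY Z hYZ⟩) F hF
  have hM : IsBFilter M := hMmax.1
  refine ⟨M, ⟨hM, fun Y => ?_⟩, hFM⟩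
  by_contra hcon
  push_neg at hcon
  obtain ⟨hY, hYc⟩ := hcon
  set M' : Set B := {Z | ∃ X ∈ M, X ⊓ Y ≤ Z} with hM'def
  have hMM' : M ⊆ M' := fun X hX => ⟨X, hX, inf_le_left⟩
  have hM'filt : IsBFilter M' := by
    refine ⟨⟨Y, ⟨⊤, hM.top_mem', inf_le_right⟩⟩, ?_, ?_, ?_⟩
    · rintro ⟨X, hX, hXY⟩
      have : X ≤ Yᶜ := le_compl_iff_disjoint_right.mpr (disjoint_iff.mpr (le_bot_iff.mp hXY))
      exact hYc (hM.2.2.2 X hX Yᶜ this)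
    · rintro Z1 ⟨X1, hX1, h1⟩ Z2 ⟨X2, hX2, h2⟩
      refine ⟨X1 ⊓ X2, hM.2.2.1 X1 hX1 X2 hX2, ?_⟩
      calc X1 ⊓ X2 ⊓ Y ≤ (X1 ⊓ Y) ⊓ (X2 ⊓ Y) :=
            le_inf (inf_le_inf_right Y inf_le_left) (inf_le_inf_right Y inf_le_right)
        _ ≤ Z1 ⊓ Z2 := inf_le_inf h1 h2
    · rintro Z ⟨X, hX, hXZ⟩ W hZW
      exact ⟨X, hX, hXZ.trans hZW⟩
  have : M' ⊆ M := hMmax.2 hM'filt hMM'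
  exact hY (this ⟨⊤, hM.top_mem', inf_le_right⟩)

end MainAux


/-- Equivalence of: (a) `T` has the Skolem property; (b) for every proper ideal `A` of
`T` the family of the `S a` for `a ∈ A` has the finite intersection property in `B`;
(c) every proper ideal of `T` is contained in an ideal `(U)^T` for some ultrafilter `U`
in `B`; (d) every maximal ideal of `T` is of the form `(U)^T` for some ultrafilter `U`
in `B`. -/
theorem stmt_1 [∀ l, CommRing (D l)] [∀ l, Nontrivial (D l)]
    (T : Subring (∀ l, D l)) :
    (HasSkolem T ↔
      (∀ A : Ideal T, A ≠ ⊤ → ∀ (n : ℕ) (a : Fin (n + 1) → T), (∀ i, a i ∈ A) →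
        (⨅ i, SFam ((a i : ∀ l, D l))) ≠ ⊥)) ∧
    ((∀ A : Ideal T, A ≠ ⊤ → ∀ (n : ℕ) (a : Fin (n + 1) → T), (∀ i, a i ∈ A) →
        (⨅ i, SFam ((a i : ∀ l, D l))) ≠ ⊥) ↔
      (∀ A : Ideal T, A ≠ ⊤ → ∃ U : Set (∀ l, Set (MaximalSpectrum (D l))),
        IsBUltrafilter U ∧ ∀ a : T, a ∈ A → SFam (a : ∀ l, D l) ∈ U)) ∧
    ((∀ A : Ideal T, A ≠ ⊤ → ∃ U : Set (∀ l, Set (MaximalSpectrum (D l))),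
        IsBUltrafilter U ∧ ∀ a : T, a ∈ A → SFam (a : ∀ l, D l) ∈ U) ↔
      (∀ M : Ideal T, M.IsMaximal → ∃ U : Set (∀ l, Set (MaximalSpectrum (D l))),
        IsBUltrafilter U ∧ ∀ a : T, a ∈ M ↔ SFam (a : ∀ l, D l) ∈ U)) := by
  
  classical
  refine ⟨⟨?_, ?_⟩, ⟨?_, ?_⟩, ⟨?_, ?_⟩⟩
  · -- (a) → (b)
    intro hsk A hA n a ha hbot
    have hcomp : ∀ l, Ideal.span (Set.range fun i => ((a i : ∀ m, D m) l)) = ⊤ := by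
      intro l
      by_contra hne
      obtain ⟨M, hM, hle⟩ := Ideal.exists_le_maximal _ hne
      have hmem : (⟨M, hM⟩ : MaximalSpectrum (D l)) ∈ (⨅ i, SFam ((a i : ∀ m, D m))) l := by
        simp only [iInf_apply, Set.iInf_eq_iInter, Set.mem_iInter]
        intro i
        exact hle (Ideal.subset_span ⟨i, rfl⟩)
      rw [hbot] at hmem
      simpa using hmem
    have htop := hsk n a hcomp
    have hle : Ideal.span (Set.range a) ≤ A :=
      Ideal.span_le.mpr (by rintro _ ⟨i, rfl⟩; exact ha i)
    rw [htop] at hle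
    exact hA (top_le_iff.mp hle)
  · -- (b) → (a)
    intro hb n a hcomp
    by_contra hne
    have h1 : (⨅ i, SFam ((a i : ∀ l, D l))) = ⊥ := by
      funext l
      ext P
      simp only [iInf_apply, Set.iInf_eq_iInter, Set.mem_iInter, Pi.bot_apply,
        Set.bot_eq_empty, Set.mem_empty_iff_false, iff_false]
      intro hall
      have hsub : Ideal.span (Set.range fun i => ((a i : ∀ m, D m) l)) ≤ P.asIdeal :=
        Ideal.span_le.mpr (by rintro _ ⟨i, rfl⟩; exact hall i)
      rw [hcomp l] at hsub
      exact P.isMaximal.ne_top (top_le_iff.mp hsub)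
    exact hb _ hne n a (fun i => Ideal.subset_span ⟨i, rfl⟩) h1
  · -- (b) → (c)
    intro hb A hA
    set F : Set (∀ l, Set (MaximalSpectrum (D l))) :=
      {Z | ∃ s : Finset T, s.Nonempty ∧ (∀ x ∈ s, x ∈ A) ∧
        s.inf (fun x => SFam (x : ∀ l, D l)) ≤ Z} with hFdef
    have hinf_ne : ∀ s : Finset T, s.Nonempty → (∀ x ∈ s, x ∈ A) →
        s.inf (fun x => SFam (x : ∀ l, D l)) ≠ ⊥ := by
      intro s hs hsA hbot
      obtain ⟨n, hn⟩ : ∃ n, s.card = n + 1 :=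
        ⟨s.card - 1, (Nat.succ_pred_eq_of_pos (Finset.card_pos.mpr hs)).symm⟩
      set a : Fin (n + 1) → T := fun i => (s.equivFin.symm (Fin.cast hn.symm i) : T) with hadef
      have haA : ∀ i, a i ∈ A := fun i => hsA _ (s.equivFin.symm _).2
      have hle : (⨅ i, SFam ((a i : ∀ l, D l))) ≤ s.inf (fun x => SFam (x : ∀ l, D l)) := by
        refine Finset.le_inf fun x hx => ?_
        have hax : a (Fin.cast hn (s.equivFin ⟨x, hx⟩)) = x := by
          simp [hadef]
        calc (⨅ i, SFam ((a i : ∀ l, D l)))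
            ≤ SFam ((a (Fin.cast hn (s.equivFin ⟨x, hx⟩)) : ∀ l, D l)) := iInf_le _ _
          _ = SFam (x : ∀ l, D l) := by rw [hax]
      exact hb A hA n a haA (le_bot_iff.mp (hle.trans_eq hbot))
    have hFilt : IsBFilter F := by
      refine ⟨⟨⊤, {0}, Finset.singleton_nonempty _, by simpa using A.zero_mem, le_top⟩,
        ?_, ?_, ?_⟩
      · rintro ⟨s, hs, hsA, hle⟩
        exact hinf_ne s hs hsA (le_bot_iff.mp hle)
      · rintro X ⟨s1, hs1, hs1A, hle1⟩ Y ⟨s2, hs2, hs2A, hle2⟩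
        refine ⟨s1 ∪ s2, hs1.mono Finset.subset_union_left, ?_, ?_⟩
        · intro x hx
          rcases Finset.mem_union.mp hx with h | h
          · exact hs1A x h
          · exact hs2A x h
        · rw [Finset.inf_union]
          exact inf_le_inf hle1 hle2
      · rintro Y ⟨s, hs, hsA, hle⟩ Z hYZ
        exact ⟨s, hs, hsA, hle.trans hYZ⟩
    obtain ⟨U, hU, hFU⟩ := exists_bultrafilter hFilt
    exact ⟨U, hU, fun a haA =>
      hFU ⟨{a}, Finset.singleton_nonempty _, by simpa using haA, by simp⟩⟩
  · -- (c) → (b)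
    intro hc A hA n a ha hbot
    obtain ⟨U, hU, hAU⟩ := hc A hA
    have hmem : (⨅ i, SFam ((a i : ∀ l, D l))) ∈ U :=
      hU.1.iInf_mem' n _ fun i => hAU _ (ha i)
    rw [hbot] at hmem
    exact hU.1.2.1 hmem
  · -- (c) → (d)
    intro hc M hM
    obtain ⟨U, hU, hMU⟩ := hc M hM.ne_top
    set J : Ideal T :=
      { carrier := {x : T | SFam (x : ∀ l, D l) ∈ U}
        zero_mem' := by
          show SFam (((0 : T) : ∀ l, D l)) ∈ U
          rw [show ((0 : T) : ∀ l, D l) = 0 from rfl, sfam_zero]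
          exact hU.1.top_mem'
        add_mem' := by
          intro x y hx hy
          have hmeet := hU.1.2.2.1 _ hx _ hy
          refine hU.1.2.2.2 _ hmeet _ ?_
          show SFam ((x : ∀ l, D l)) ⊓ SFam ((y : ∀ l, D l)) ≤
            SFam (((x + y : T) : ∀ l, D l))
          rw [show ((x + y : T) : ∀ l, D l) = (x : ∀ l, D l) + (y : ∀ l, D l) from rfl]
          exact sfam_add _ _
        smul_mem' := by
          intro c x hx
          show SFam (((c * x : T) : ∀ l, D l)) ∈ U
          refine hU.1.2.2.2 _ hx _ ?_
          exact sfam_mul (c : ∀ l, D l) (x : ∀ l, D l) } with hJdef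
    have hJne : J ≠ ⊤ := by
      intro h
      have h1 : (1 : T) ∈ J := h ▸ Submodule.mem_top
      have h1' : SFam (((1 : T) : ∀ l, D l)) ∈ U := h1
      rw [show ((1 : T) : ∀ l, D l) = 1 from rfl, sfam_one] at h1'
      exact hU.1.2.1 h1'
    have hMJ : M ≤ J := fun x hx => hMU x hx
    have heq : M = J := hM.eq_of_le hJne hMJ
    refine ⟨U, hU, fun a => ⟨hMU a, fun hS => ?_⟩⟩
    rw [heq]
    exact hS
  · -- (d) → (c)
    intro hd A hA
    obtain ⟨M, hM, hAM⟩ := Ideal.exists_le_maximal A hA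
    obtain ⟨U, hU, hiff⟩ := hd M hM
    exact ⟨U, hU, fun a ha => (hiff a).mp (hAM ha)⟩
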